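/- arXiv:gr-qc/0405039 — 4 statements merged into one kernel-verified Lean document; each statement's English description precedes it below -/
import Mathlib

section
/- Let μ, λ, φ : I × ℝ → ℝ be C² functions (t denotes the first variable, r the second; dot and prime denote ∂_t and ∂_r). Define X = φ̇ e^{-μ} − φ' e^{-λ}, Y = φ̇ e^{-μ} + φ' e^{-λ}, the operators D⁺ = e^{-μ}∂_t + e^{-λ}∂_r and D⁻ = e^{-μ}∂_t − e^{-λ}∂_r, and coefficients a = (−λ̇ − 1/t) e^{-μ} − μ' e^{-λ}, b = −e^{-μ}/t, c = (−λ̇ − 1/t) e^{-μ} + μ' e^{-λ}. If φ satisfies the wave equation e^{-2λ} φ'' − e^{-2μ} φ̈ − e^{-2μ}(λ̇ − μ̇ + 2/t) φ̇ − e^{-2λ}(λ' − μ') φ' = 0 on I × ℝ with I ⊆ (0,∞), then D⁺X = aX + bY and D⁻Y = bX + cY on I × ℝ. -/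
open Real Set

/-- partial derivative with respect to the first (time) variable -/
noncomputable def pd1 (f : ℝ → ℝ → ℝ) (t r : ℝ) : ℝ := deriv (fun τ => f τ r) t

/-- partial derivative with respect to the second (space) variable -/
noncomputable def pd2 (f : ℝ → ℝ → ℝ) (t r : ℝ) : ℝ := deriv (fun ρ => f t ρ) r

section helpers

variable {f : ℝ → ℝ → ℝ} {t r : ℝ}

lemma hasDerivAt_fst (hf : Differentiable ℝ (Function.uncurry f)) (t r : ℝ) :
    HasDerivAt (fun τ => f τ r) ((fderiv ℝ (Function.uncurry f) (t, r)) (1, 0)) t := by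
  have h2 : HasDerivAt (fun τ : ℝ => (τ, r)) ((1 : ℝ), (0 : ℝ)) t :=
    HasDerivAt.prodMk (hasDerivAt_id t) (hasDerivAt_const t r)
  exact (hf (t, r)).hasFDerivAt.comp_hasDerivAt t h2

lemma hasDerivAt_snd (hf : Differentiable ℝ (Function.uncurry f)) (t r : ℝ) :
    HasDerivAt (fun ρ => f t ρ) ((fderiv ℝ (Function.uncurry f) (t, r)) (0, 1)) r := by
  have h2 : HasDerivAt (fun ρ : ℝ => (t, ρ)) ((0 : ℝ), (1 : ℝ)) r :=
    HasDerivAt.prodMk (hasDerivAt_const r t) (hasDerivAt_id r)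
  exact (hf (t, r)).hasFDerivAt.comp_hasDerivAt r h2

lemma hasDerivAt_pd1 (hf : Differentiable ℝ (Function.uncurry f)) (t r : ℝ) :
    HasDerivAt (fun τ => f τ r) (pd1 f t r) t :=
  (hasDerivAt_fst hf t r).differentiableAt.hasDerivAt

lemma hasDerivAt_pd2 (hf : Differentiable ℝ (Function.uncurry f)) (t r : ℝ) :
    HasDerivAt (fun ρ => f t ρ) (pd2 f t r) r :=
  (hasDerivAt_snd hf t r).differentiableAt.hasDerivAt

lemma pd1_eq (hf : Differentiable ℝ (Function.uncurry f)) (t r : ℝ) :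
    pd1 f t r = (fderiv ℝ (Function.uncurry f) (t, r)) (1, 0) :=
  (hasDerivAt_fst hf t r).deriv

lemma pd2_eq (hf : Differentiable ℝ (Function.uncurry f)) (t r : ℝ) :
    pd2 f t r = (fderiv ℝ (Function.uncurry f) (t, r)) (0, 1) :=
  (hasDerivAt_snd hf t r).deriv

lemma hasDerivAt_applied_fst (hf : ContDiff ℝ 2 (Function.uncurry f)) (v : ℝ × ℝ) (t r : ℝ) :
    HasDerivAt (fun τ => (fderiv ℝ (Function.uncurry f) (τ, r)) v)
      ((fderiv ℝ (fderiv ℝ (Function.uncurry f)) (t, r)) (1, 0) v) t := by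
  have hg' : Differentiable ℝ (fderiv ℝ (Function.uncurry f)) :=
    (hf.fderiv_right (m := 1) (by norm_num)).differentiable one_ne_zero
  have h2 : HasDerivAt (fun τ : ℝ => (τ, r)) ((1 : ℝ), (0 : ℝ)) t :=
    HasDerivAt.prodMk (hasDerivAt_id t) (hasDerivAt_const t r)
  have hD : HasDerivAt (fun τ => fderiv ℝ (Function.uncurry f) (τ, r))
      ((fderiv ℝ (fderiv ℝ (Function.uncurry f)) (t, r)) (1, 0)) t :=
    (hg' (t, r)).hasFDerivAt.comp_hasDerivAt t h2
  simpa using hD.clm_apply (hasDerivAt_const t v)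

lemma hasDerivAt_applied_snd (hf : ContDiff ℝ 2 (Function.uncurry f)) (v : ℝ × ℝ) (t r : ℝ) :
    HasDerivAt (fun ρ => (fderiv ℝ (Function.uncurry f) (t, ρ)) v)
      ((fderiv ℝ (fderiv ℝ (Function.uncurry f)) (t, r)) (0, 1) v) r := by
  have hg' : Differentiable ℝ (fderiv ℝ (Function.uncurry f)) :=
    (hf.fderiv_right (m := 1) (by norm_num)).differentiable one_ne_zero
  have h2 : HasDerivAt (fun ρ : ℝ => (t, ρ)) ((0 : ℝ), (1 : ℝ)) r :=
    HasDerivAt.prodMk (hasDerivAt_const r t) (hasDerivAt_id r)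
  have hD : HasDerivAt (fun ρ => fderiv ℝ (Function.uncurry f) (t, ρ))
      ((fderiv ℝ (fderiv ℝ (Function.uncurry f)) (t, r)) (0, 1)) r :=
    (hg' (t, r)).hasFDerivAt.comp_hasDerivAt r h2
  simpa using hD.clm_apply (hasDerivAt_const r v)

lemma hasDerivAt_pd1_fst (hf : ContDiff ℝ 2 (Function.uncurry f)) (t r : ℝ) :
    HasDerivAt (fun τ => pd1 f τ r) (pd1 (pd1 f) t r) t := by
  have hd : Differentiable ℝ (Function.uncurry f) := hf.differentiable (by norm_num)
  have : (fun τ => pd1 f τ r) = fun τ => (fderiv ℝ (Function.uncurry f) (τ, r)) (1, 0) :=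
    funext fun τ => pd1_eq hd τ r
  rw [show pd1 (pd1 f) t r = deriv (fun τ => pd1 f τ r) t from rfl, this]
  exact ((hasDerivAt_applied_fst hf (1, 0) t r).differentiableAt).hasDerivAt

lemma hasDerivAt_pd1_snd (hf : ContDiff ℝ 2 (Function.uncurry f)) (t r : ℝ) :
    HasDerivAt (fun ρ => pd1 f t ρ) (pd2 (pd1 f) t r) r := by
  have hd : Differentiable ℝ (Function.uncurry f) := hf.differentiable (by norm_num)
  have : (fun ρ => pd1 f t ρ) = fun ρ => (fderiv ℝ (Function.uncurry f) (t, ρ)) (1, 0) :=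
    funext fun ρ => pd1_eq hd t ρ
  rw [show pd2 (pd1 f) t r = deriv (fun ρ => pd1 f t ρ) r from rfl, this]
  exact ((hasDerivAt_applied_snd hf (1, 0) t r).differentiableAt).hasDerivAt

lemma hasDerivAt_pd2_fst (hf : ContDiff ℝ 2 (Function.uncurry f)) (t r : ℝ) :
    HasDerivAt (fun τ => pd2 f τ r) (pd1 (pd2 f) t r) t := by
  have hd : Differentiable ℝ (Function.uncurry f) := hf.differentiable (by norm_num)
  have : (fun τ => pd2 f τ r) = fun τ => (fderiv ℝ (Function.uncurry f) (τ, r)) (0, 1) :=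
    funext fun τ => pd2_eq hd τ r
  rw [show pd1 (pd2 f) t r = deriv (fun τ => pd2 f τ r) t from rfl, this]
  exact ((hasDerivAt_applied_fst hf (0, 1) t r).differentiableAt).hasDerivAt

lemma hasDerivAt_pd2_snd (hf : ContDiff ℝ 2 (Function.uncurry f)) (t r : ℝ) :
    HasDerivAt (fun ρ => pd2 f t ρ) (pd2 (pd2 f) t r) r := by
  have hd : Differentiable ℝ (Function.uncurry f) := hf.differentiable (by norm_num)
  have : (fun ρ => pd2 f t ρ) = fun ρ => (fderiv ℝ (Function.uncurry f) (t, ρ)) (0, 1) :=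
    funext fun ρ => pd2_eq hd t ρ
  rw [show pd2 (pd2 f) t r = deriv (fun ρ => pd2 f t ρ) r from rfl, this]
  exact ((hasDerivAt_applied_snd hf (0, 1) t r).differentiableAt).hasDerivAt

lemma pd_symm (hf : ContDiff ℝ 2 (Function.uncurry f)) (t r : ℝ) :
    pd1 (pd2 f) t r = pd2 (pd1 f) t r := by
  have hd : Differentiable ℝ (Function.uncurry f) := hf.differentiable (by norm_num)
  have h1 : pd1 (pd2 f) t r
      = (fderiv ℝ (fderiv ℝ (Function.uncurry f)) (t, r)) (1, 0) (0, 1) := by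
    have h := hasDerivAt_applied_fst hf (0, 1) t r
    have heq : (fun τ => pd2 f τ r) = fun τ => (fderiv ℝ (Function.uncurry f) (τ, r)) (0, 1) :=
      funext fun τ => pd2_eq hd τ r
    rw [show pd1 (pd2 f) t r = deriv (fun τ => pd2 f τ r) t from rfl, heq]
    exact h.deriv
  have h2 : pd2 (pd1 f) t r
      = (fderiv ℝ (fderiv ℝ (Function.uncurry f)) (t, r)) (0, 1) (1, 0) := by
    have h := hasDerivAt_applied_snd hf (1, 0) t r
    have heq : (fun ρ => pd1 f t ρ) = fun ρ => (fderiv ℝ (Function.uncurry f) (t, ρ)) (1, 0) :=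
      funext fun ρ => pd1_eq hd t ρ
    rw [show pd2 (pd1 f) t r = deriv (fun ρ => pd1 f t ρ) r from rfl, heq]
    exact h.deriv
  rw [h1, h2]
  exact (hf.contDiffAt.isSymmSndFDerivAt (by norm_num)).eq _ _

end helpers

theorem wave_equation_to_characteristic_system
    (I : Set ℝ) (hI : I ⊆ Set.Ioi 0)
    (μ lam φ : ℝ → ℝ → ℝ)
    (hμ : ContDiff ℝ 2 (Function.uncurry μ))
    (hlam : ContDiff ℝ 2 (Function.uncurry lam))
    (hφ : ContDiff ℝ 2 (Function.uncurry φ))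
    -- the wave equation
    (hwave : ∀ t ∈ I, ∀ r : ℝ,
      Real.exp (-2 * lam t r) * pd2 (pd2 φ) t r
      - Real.exp (-2 * μ t r) * pd1 (pd1 φ) t r
      - Real.exp (-2 * μ t r) * (pd1 lam t r - pd1 μ t r + 2 / t) * pd1 φ t r
      - Real.exp (-2 * lam t r) * (pd2 lam t r - pd2 μ t r) * pd2 φ t r = 0) :
    ∀ t ∈ I, ∀ r : ℝ,
      -- X, Y, a, b, c
      (fun X Y a b c =>
        (Real.exp (-μ t r) * pd1 X t r + Real.exp (-lam t r) * pd2 X t r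
          = a * X t r + b * Y t r) ∧
        (Real.exp (-μ t r) * pd1 Y t r - Real.exp (-lam t r) * pd2 Y t r
          = b * X t r + c * Y t r))
      (fun t r => pd1 φ t r * Real.exp (-μ t r) - pd2 φ t r * Real.exp (-lam t r))
      (fun t r => pd1 φ t r * Real.exp (-μ t r) + pd2 φ t r * Real.exp (-lam t r))
      ((-pd1 lam t r - 1 / t) * Real.exp (-μ t r) - pd2 μ t r * Real.exp (-lam t r))
      (-(Real.exp (-μ t r)) / t)
      ((-pd1 lam t r - 1 / t) * Real.exp (-μ t r) + pd2 μ t r * Real.exp (-lam t r)) := by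
  intro t ht r
  have hdμ : Differentiable ℝ (Function.uncurry μ) := hμ.differentiable (by norm_num)
  have hdl : Differentiable ℝ (Function.uncurry lam) := hlam.differentiable (by norm_num)
  -- first derivatives of metric coefficients
  have hμt := hasDerivAt_pd1 hdμ t r
  have hμr := hasDerivAt_pd2 hdμ t r
  have hlt := hasDerivAt_pd1 hdl t r
  have hlr := hasDerivAt_pd2 hdl t r
  have heμt : HasDerivAt (fun τ => Real.exp (-μ τ r))
      (Real.exp (-μ t r) * -pd1 μ t r) t := hμt.neg.exp
  have heμr : HasDerivAt (fun ρ => Real.exp (-μ t ρ))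
      (Real.exp (-μ t r) * -pd2 μ t r) r := hμr.neg.exp
  have helt : HasDerivAt (fun τ => Real.exp (-lam τ r))
      (Real.exp (-lam t r) * -pd1 lam t r) t := hlt.neg.exp
  have helr : HasDerivAt (fun ρ => Real.exp (-lam t ρ))
      (Real.exp (-lam t r) * -pd2 lam t r) r := hlr.neg.exp
  -- second derivatives of φ
  have hφ1t := hasDerivAt_pd1_fst hφ t r
  have hφ1r := hasDerivAt_pd1_snd hφ t r
  have hφ2t := hasDerivAt_pd2_fst hφ t r
  have hφ2r := hasDerivAt_pd2_snd hφ t r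
  -- derivatives of X and Y
  have hX1 := (hφ1t.mul heμt).sub (hφ2t.mul helt)
  have hX2 := (hφ1r.mul heμr).sub (hφ2r.mul helr)
  have hY1 := (hφ1t.mul heμt).add (hφ2t.mul helt)
  have hY2 := (hφ1r.mul heμr).add (hφ2r.mul helr)
  have E1 : pd1 (fun t r => pd1 φ t r * Real.exp (-μ t r) - pd2 φ t r * Real.exp (-lam t r)) t r
      = pd1 (pd1 φ) t r * Real.exp (-μ t r) + pd1 φ t r * (Real.exp (-μ t r) * -pd1 μ t r)
        - (pd1 (pd2 φ) t r * Real.exp (-lam t r)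
          + pd2 φ t r * (Real.exp (-lam t r) * -pd1 lam t r)) := hX1.deriv
  have E2 : pd2 (fun t r => pd1 φ t r * Real.exp (-μ t r) - pd2 φ t r * Real.exp (-lam t r)) t r
      = pd2 (pd1 φ) t r * Real.exp (-μ t r) + pd1 φ t r * (Real.exp (-μ t r) * -pd2 μ t r)
        - (pd2 (pd2 φ) t r * Real.exp (-lam t r)
          + pd2 φ t r * (Real.exp (-lam t r) * -pd2 lam t r)) := hX2.deriv
  have E3 : pd1 (fun t r => pd1 φ t r * Real.exp (-μ t r) + pd2 φ t r * Real.exp (-lam t r)) t r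
      = pd1 (pd1 φ) t r * Real.exp (-μ t r) + pd1 φ t r * (Real.exp (-μ t r) * -pd1 μ t r)
        + (pd1 (pd2 φ) t r * Real.exp (-lam t r)
          + pd2 φ t r * (Real.exp (-lam t r) * -pd1 lam t r)) := hY1.deriv
  have E4 : pd2 (fun t r => pd1 φ t r * Real.exp (-μ t r) + pd2 φ t r * Real.exp (-lam t r)) t r
      = pd2 (pd1 φ) t r * Real.exp (-μ t r) + pd1 φ t r * (Real.exp (-μ t r) * -pd2 μ t r)
        + (pd2 (pd2 φ) t r * Real.exp (-lam t r)
          + pd2 φ t r * (Real.exp (-lam t r) * -pd2 lam t r)) := hY2.deriv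
  have hsym := pd_symm hφ t r
  have hw := hwave t ht r
  have hEμ : Real.exp (-2 * μ t r) = Real.exp (-μ t r) * Real.exp (-μ t r) := by
    rw [← Real.exp_add]; ring_nf
  have hEl : Real.exp (-2 * lam t r) = Real.exp (-lam t r) * Real.exp (-lam t r) := by
    rw [← Real.exp_add]; ring_nf
  rw [hEμ, hEl] at hw
  refine ⟨?_, ?_⟩
  · rw [E1, E2]
    linear_combination (-1 : ℝ) * hw
      + (-(Real.exp (-μ t r) * Real.exp (-lam t r))) * hsym
  · rw [E3, E4]
    linear_combination (-1 : ℝ) * hw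
      + (Real.exp (-μ t r) * Real.exp (-lam t r)) * hsym
end

section
/- Conversely, with the notation of Lemma 2.1 (X = φ̇ e^{-μ} − φ' e^{-λ}, Y = φ̇ e^{-μ} + φ' e^{-λ}, D±, a, b, c as defined there, with μ' replaced throughout by a given C¹ function μ̃), if the pair (X, Y) satisfies D⁺X = ãX + bY and D⁻Y = bX + c̃Y on I × ℝ and μ̃ = μ' on I × ℝ, then φ satisfies the wave equation e^{-2λ} φ'' − e^{-2μ} φ̈ − e^{-2μ}(λ̇ − μ̇ + 2/t) φ̇ − e^{-2λ}(λ' − μ') φ' = 0. -/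
open Real Set

open Function

lemma hasDerivAt_slice1 {f : ℝ → ℝ → ℝ} (hf : Differentiable ℝ (uncurry f)) (t r : ℝ) :
    HasDerivAt (fun τ => f τ r) (pd1 f t r) t := by
  have h : DifferentiableAt ℝ (fun τ => f τ r) t :=
    by have := (hf (t, r)).comp t ((differentiableAt_id : DifferentiableAt ℝ id t).prodMk (differentiableAt_const r)); exact this
  exact h.hasDerivAt

lemma hasDerivAt_slice2 {f : ℝ → ℝ → ℝ} (hf : Differentiable ℝ (uncurry f)) (t r : ℝ) :
    HasDerivAt (fun ρ => f t ρ) (pd2 f t r) r := by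
  have h : DifferentiableAt ℝ (fun ρ => f t ρ) r :=
    (hf (t, r)).comp r ((differentiableAt_const t).prodMk differentiableAt_id)
  exact h.hasDerivAt

lemma pd1_eq_fderiv {f : ℝ → ℝ → ℝ} (hf : Differentiable ℝ (uncurry f)) (t r : ℝ) :
    pd1 f t r = fderiv ℝ (uncurry f) (t, r) (1, 0) := by
  have h1 : HasDerivAt (fun τ => (τ, r)) ((1:ℝ), (0:ℝ)) t :=
    (hasDerivAt_id t).prodMk (hasDerivAt_const t r)
  exact ((hf (t, r)).hasFDerivAt.comp_hasDerivAt t h1).deriv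

lemma pd2_eq_fderiv {f : ℝ → ℝ → ℝ} (hf : Differentiable ℝ (uncurry f)) (t r : ℝ) :
    pd2 f t r = fderiv ℝ (uncurry f) (t, r) (0, 1) := by
  have h1 : HasDerivAt (fun ρ => (t, ρ)) ((0:ℝ), (1:ℝ)) r :=
    (hasDerivAt_const r t).prodMk (hasDerivAt_id r)
  exact ((hf (t, r)).hasFDerivAt.comp_hasDerivAt r h1).deriv

lemma diff_pd1 {f : ℝ → ℝ → ℝ} (hf : ContDiff ℝ 2 (uncurry f)) :
    Differentiable ℝ (uncurry (pd1 f)) := by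
  have hd : Differentiable ℝ (uncurry f) := hf.differentiable (by norm_num)
  have h : ContDiff ℝ 1 (fun p : ℝ × ℝ => fderiv ℝ (uncurry f) p (1, 0)) :=
    (hf.fderiv_right (le_refl 2)).clm_apply contDiff_const
  have he : uncurry (pd1 f) = fun p : ℝ × ℝ => fderiv ℝ (uncurry f) p (1, 0) := by
    funext p; exact pd1_eq_fderiv hd p.1 p.2
  rw [he]; exact h.differentiable one_ne_zero

lemma diff_pd2 {f : ℝ → ℝ → ℝ} (hf : ContDiff ℝ 2 (uncurry f)) :
    Differentiable ℝ (uncurry (pd2 f)) := by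
  have hd : Differentiable ℝ (uncurry f) := hf.differentiable (by norm_num)
  have h : ContDiff ℝ 1 (fun p : ℝ × ℝ => fderiv ℝ (uncurry f) p (0, 1)) :=
    (hf.fderiv_right (le_refl 2)).clm_apply contDiff_const
  have he : uncurry (pd2 f) = fun p : ℝ × ℝ => fderiv ℝ (uncurry f) p (0, 1) := by
    funext p; exact pd2_eq_fderiv hd p.1 p.2
  rw [he]; exact h.differentiable one_ne_zero

theorem characteristic_system_to_wave_equation
    (I : Set ℝ) (hI : I ⊆ Set.Ioi 0)
    (μ lam φ μtilde : ℝ → ℝ → ℝ)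
    (hμ : ContDiff ℝ 2 (Function.uncurry μ))
    (hlam : ContDiff ℝ 2 (Function.uncurry lam))
    (hφ : ContDiff ℝ 2 (Function.uncurry φ))
    (hμtilde : ContDiff ℝ 1 (Function.uncurry μtilde))
    -- the characteristic system with μ' replaced by μ̃, for
    -- X = φ̇ e^{-μ} − φ' e^{-λ}, Y = φ̇ e^{-μ} + φ' e^{-λ}
    (hX : ∀ t ∈ I, ∀ r : ℝ,
      Real.exp (-μ t r) *
          pd1 (fun t r => pd1 φ t r * Real.exp (-μ t r) - pd2 φ t r * Real.exp (-lam t r)) t r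
        + Real.exp (-lam t r) *
          pd2 (fun t r => pd1 φ t r * Real.exp (-μ t r) - pd2 φ t r * Real.exp (-lam t r)) t r
      = ((-pd1 lam t r - 1 / t) * Real.exp (-μ t r) - μtilde t r * Real.exp (-lam t r)) *
          (pd1 φ t r * Real.exp (-μ t r) - pd2 φ t r * Real.exp (-lam t r))
        + (-(Real.exp (-μ t r)) / t) *
          (pd1 φ t r * Real.exp (-μ t r) + pd2 φ t r * Real.exp (-lam t r)))
    (hY : ∀ t ∈ I, ∀ r : ℝ,
      Real.exp (-μ t r) *
          pd1 (fun t r => pd1 φ t r * Real.exp (-μ t r) + pd2 φ t r * Real.exp (-lam t r)) t r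
        - Real.exp (-lam t r) *
          pd2 (fun t r => pd1 φ t r * Real.exp (-μ t r) + pd2 φ t r * Real.exp (-lam t r)) t r
      = (-(Real.exp (-μ t r)) / t) *
          (pd1 φ t r * Real.exp (-μ t r) - pd2 φ t r * Real.exp (-lam t r))
        + ((-pd1 lam t r - 1 / t) * Real.exp (-μ t r) + μtilde t r * Real.exp (-lam t r)) *
          (pd1 φ t r * Real.exp (-μ t r) + pd2 φ t r * Real.exp (-lam t r)))
    (hμeq : ∀ t ∈ I, ∀ r : ℝ, μtilde t r = pd2 μ t r) :
    ∀ t ∈ I, ∀ r : ℝ,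
      Real.exp (-2 * lam t r) * pd2 (pd2 φ) t r
      - Real.exp (-2 * μ t r) * pd1 (pd1 φ) t r
      - Real.exp (-2 * μ t r) * (pd1 lam t r - pd1 μ t r + 2 / t) * pd1 φ t r
      - Real.exp (-2 * lam t r) * (pd2 lam t r - pd2 μ t r) * pd2 φ t r = 0 := by
  have hμd : Differentiable ℝ (uncurry μ) := hμ.differentiable (by norm_num)
  have hlamd : Differentiable ℝ (uncurry lam) := hlam.differentiable (by norm_num)
  have hp1 : Differentiable ℝ (uncurry (pd1 φ)) := diff_pd1 hφ
  have hp2 : Differentiable ℝ (uncurry (pd2 φ)) := diff_pd2 hφ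
  intro t ht r
  -- t-slices
  have Hu1 : HasDerivAt (fun τ => pd1 φ τ r) (pd1 (pd1 φ) t r) t := hasDerivAt_slice1 hp1 t r
  have Hv1 : HasDerivAt (fun τ => pd2 φ τ r) (pd1 (pd2 φ) t r) t := hasDerivAt_slice1 hp2 t r
  have Ha1 : HasDerivAt (fun τ => Real.exp (-μ τ r))
      (Real.exp (-μ t r) * (-pd1 μ t r)) t := ((hasDerivAt_slice1 hμd t r).neg).exp
  have Hb1 : HasDerivAt (fun τ => Real.exp (-lam τ r))
      (Real.exp (-lam t r) * (-pd1 lam t r)) t := ((hasDerivAt_slice1 hlamd t r).neg).exp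
  -- r-slices
  have Hu2 : HasDerivAt (fun ρ => pd1 φ t ρ) (pd2 (pd1 φ) t r) r := hasDerivAt_slice2 hp1 t r
  have Hv2 : HasDerivAt (fun ρ => pd2 φ t ρ) (pd2 (pd2 φ) t r) r := hasDerivAt_slice2 hp2 t r
  have Ha2 : HasDerivAt (fun ρ => Real.exp (-μ t ρ))
      (Real.exp (-μ t r) * (-pd2 μ t r)) r := ((hasDerivAt_slice2 hμd t r).neg).exp
  have Hb2 : HasDerivAt (fun ρ => Real.exp (-lam t ρ))
      (Real.exp (-lam t r) * (-pd2 lam t r)) r := ((hasDerivAt_slice2 hlamd t r).neg).exp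
  have hA1 : pd1 (fun t r => pd1 φ t r * Real.exp (-μ t r) - pd2 φ t r * Real.exp (-lam t r)) t r
      = (pd1 (pd1 φ) t r * Real.exp (-μ t r) + pd1 φ t r * (Real.exp (-μ t r) * (-pd1 μ t r)))
        - (pd1 (pd2 φ) t r * Real.exp (-lam t r) + pd2 φ t r * (Real.exp (-lam t r) * (-pd1 lam t r))) :=
    ((Hu1.mul Ha1).sub (Hv1.mul Hb1)).deriv
  have hA2 : pd2 (fun t r => pd1 φ t r * Real.exp (-μ t r) - pd2 φ t r * Real.exp (-lam t r)) t r
      = (pd2 (pd1 φ) t r * Real.exp (-μ t r) + pd1 φ t r * (Real.exp (-μ t r) * (-pd2 μ t r)))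
        - (pd2 (pd2 φ) t r * Real.exp (-lam t r) + pd2 φ t r * (Real.exp (-lam t r) * (-pd2 lam t r))) :=
    ((Hu2.mul Ha2).sub (Hv2.mul Hb2)).deriv
  have hB1 : pd1 (fun t r => pd1 φ t r * Real.exp (-μ t r) + pd2 φ t r * Real.exp (-lam t r)) t r
      = (pd1 (pd1 φ) t r * Real.exp (-μ t r) + pd1 φ t r * (Real.exp (-μ t r) * (-pd1 μ t r)))
        + (pd1 (pd2 φ) t r * Real.exp (-lam t r) + pd2 φ t r * (Real.exp (-lam t r) * (-pd1 lam t r))) :=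
    ((Hu1.mul Ha1).add (Hv1.mul Hb1)).deriv
  have hB2 : pd2 (fun t r => pd1 φ t r * Real.exp (-μ t r) + pd2 φ t r * Real.exp (-lam t r)) t r
      = (pd2 (pd1 φ) t r * Real.exp (-μ t r) + pd1 φ t r * (Real.exp (-μ t r) * (-pd2 μ t r)))
        + (pd2 (pd2 φ) t r * Real.exp (-lam t r) + pd2 φ t r * (Real.exp (-lam t r) * (-pd2 lam t r))) :=
    ((Hu2.mul Ha2).add (Hv2.mul Hb2)).deriv
  have e1 := hX t ht r
  have e2 := hY t ht r
  rw [hA1, hA2, hμeq t ht r] at e1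
  rw [hB1, hB2, hμeq t ht r] at e2
  have hexμ : Real.exp (-2 * μ t r) = Real.exp (-μ t r) * Real.exp (-μ t r) := by
    rw [← Real.exp_add]; ring_nf
  have hexl : Real.exp (-2 * lam t r) = Real.exp (-lam t r) * Real.exp (-lam t r) := by
    rw [← Real.exp_add]; ring_nf
  rw [hexμ, hexl]
  linear_combination (-(1:ℝ)/2) * e1 + (-(1:ℝ)/2) * e2
end

section
/- Let p̄ : I × ℝ → [0,∞) be continuous with I ⊆ (0,∞), 1 ∈ I, let μ̊ : ℝ → ℝ be C¹, and suppose the expression E(t,r) = (e^{−2μ̊(r)} + k)/t − k + (8π/t) ∫_t^1 s² p̄(s,r) ds is strictly positive on I × ℝ. Then μ(t,r) := −(1/2) log E(t,r) is the unique C¹ (in t) function with μ(1,r) = μ̊(r) satisfying the field equation e^{−2μ}(2t ∂_t μ − 1) − k = 8π t² p̄ on I × ℝ. -/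
open Real Set MeasureTheory intervalIntegral

lemma prim_hasDerivAt {f : ℝ → ℝ} (hf : Continuous f) (a t : ℝ) :
    HasDerivAt (fun τ => ∫ s in a..τ, f s) (f t) t :=
  intervalIntegral.integral_hasDerivAt_right (hf.intervalIntegrable a t)
    (hf.stronglyMeasurableAtFilter _ _) hf.continuousAt

lemma prim_contDiff {f : ℝ → ℝ} (hf : Continuous f) (a : ℝ) :
    ContDiff ℝ 1 (fun τ => ∫ s in a..τ, f s) := by
  rw [contDiff_one_iff_deriv]
  refine ⟨fun x => (prim_hasDerivAt hf a x).differentiableAt, ?_⟩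
  have : deriv (fun τ => ∫ s in a..τ, f s) = f := funext fun x => (prim_hasDerivAt hf a x).deriv
  rw [this]; exact hf

theorem field_equation_explicit_solution
    (I : Set ℝ) (hI : I ⊆ Set.Ioi 0) (hord : I.OrdConnected) (h1I : (1:ℝ) ∈ I)
    (k : ℝ) (hk : k = -1 ∨ k = 0 ∨ k = 1)
    (pbar : ℝ → ℝ → ℝ) (hpcont : Continuous (Function.uncurry pbar))
    (hpnonneg : ∀ t ∈ I, ∀ r : ℝ, 0 ≤ pbar t r)
    (μ0 : ℝ → ℝ) (hμ0 : ContDiff ℝ 1 μ0)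
    (E : ℝ → ℝ → ℝ)
    (hE : ∀ t r, E t r =
      (Real.exp (-2 * μ0 r) + k) / t - k + (8 * Real.pi / t) * ∫ s in t..(1:ℝ), s ^ 2 * pbar s r)
    (hEpos : ∀ t ∈ I, ∀ r : ℝ, 0 < E t r)
    (μ : ℝ → ℝ → ℝ) (hμdef : ∀ t r, μ t r = -(1 / 2) * Real.log (E t r)) :
    -- μ is C¹ in t, attains the data at t = 1, satisfies the field equation,
    (∀ r : ℝ, ContDiffOn ℝ 1 (fun τ => μ τ r) I) ∧
    (∀ r : ℝ, μ 1 r = μ0 r) ∧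
    (∀ t ∈ I, ∀ r : ℝ,
      Real.exp (-2 * μ t r) * (2 * t * deriv (fun τ => μ τ r) t - 1) - k
        = 8 * Real.pi * t ^ 2 * pbar t r) ∧
    -- and it is the unique such function
    (∀ ν : ℝ → ℝ → ℝ,
      (∀ r : ℝ, ContDiffOn ℝ 1 (fun τ => ν τ r) I) →
      (∀ r : ℝ, ν 1 r = μ0 r) →
      (∀ t ∈ I, ∀ r : ℝ,
        Real.exp (-2 * ν t r) * (2 * t * deriv (fun τ => ν τ r) t - 1) - k
          = 8 * Real.pi * t ^ 2 * pbar t r) →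
      ∀ t ∈ I, ∀ r : ℝ, ν t r = μ t r) := by
  have hq : ∀ r, Continuous fun s => pbar s r := fun r =>
    hpcont.comp (continuous_id.prodMk continuous_const)
  have hP : ∀ r, Continuous fun s => s ^ 2 * pbar s r := fun r => (continuous_pow 2).mul (hq r)
  have hg : ∀ r, Continuous fun s => k + 8 * π * (s ^ 2 * pbar s r) := fun r =>
    continuous_const.add (continuous_const.mul (hP r))
  have hEfun : ∀ r, (fun τ => E τ r) = fun τ =>
      (Real.exp (-2 * μ0 r) + k) / τ - k + (8 * π / τ) * ∫ s in τ..(1:ℝ), s ^ 2 * pbar s r :=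
    fun r => funext fun τ => hE τ r
  have hGsym : ∀ r, (fun τ => ∫ s in τ..(1:ℝ), s ^ 2 * pbar s r)
      = fun τ => -∫ s in (1:ℝ)..τ, s ^ 2 * pbar s r :=
    fun r => funext fun τ => intervalIntegral.integral_symm 1 τ
  have hGder : ∀ r t, HasDerivAt (fun τ => ∫ s in τ..(1:ℝ), s ^ 2 * pbar s r)
      (-(t ^ 2 * pbar t r)) t := by
    intro r t
    rw [hGsym r]
    exact (prim_hasDerivAt (hP r) 1 t).neg
  have hGC : ∀ r, ContDiff ℝ 1 (fun τ => ∫ s in τ..(1:ℝ), s ^ 2 * pbar s r) := by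
    intro r; rw [hGsym r]; exact (prim_contDiff (hP r) 1).neg
  -- derivative of E in t
  have hEder : ∀ r t, t ≠ 0 → HasDerivAt (fun τ => E τ r)
      (-((Real.exp (-2 * μ0 r) + k) / t ^ 2)
        - (8 * π / t ^ 2) * (∫ s in t..(1:ℝ), s ^ 2 * pbar s r) - 8 * π * pbar t r * t) t := by
    intro r t ht
    rw [hEfun r]
    have h1 := (hasDerivAt_const t (Real.exp (-2 * μ0 r) + k)).div (hasDerivAt_id t) ht
    have h2 := (hasDerivAt_const t (8 * π)).div (hasDerivAt_id t) ht
    have h4 := (h1.sub_const k).add (h2.mul (hGder r t))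
    refine h4.congr_deriv ?_
    simp only [id_eq, Pi.div_apply]
    field_simp
    ring
  -- value at 1
  have hE1 : ∀ r, E 1 r = Real.exp (-2 * μ0 r) := by
    intro r
    rw [hE 1 r]
    simp
  have hμ1 : ∀ r, μ 1 r = μ0 r := by
    intro r
    rw [hμdef, hE1, Real.log_exp]; ring
  -- key algebraic identity
  have hkey : ∀ r, ∀ t : ℝ, t ≠ 0 → t * E t r
      = Real.exp (-2 * μ0 r) - ∫ s in (1:ℝ)..t, (k + 8 * π * (s ^ 2 * pbar s r)) := by
    intro r t ht
    have hsplit : (∫ s in (1:ℝ)..t, (k + 8 * π * (s ^ 2 * pbar s r)))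
        = k * (t - 1) + 8 * π * ∫ s in (1:ℝ)..t, s ^ 2 * pbar s r := by
      rw [intervalIntegral.integral_add (g := fun s => 8 * π * (s ^ 2 * pbar s r)) (intervalIntegrable_const)
        ((continuous_const.mul (hP r)).intervalIntegrable 1 t),
        intervalIntegral.integral_const, intervalIntegral.integral_const_mul]
      simp [smul_eq_mul]
      ring
    have hsym : (∫ s in t..(1:ℝ), s ^ 2 * pbar s r)
        = -∫ s in (1:ℝ)..t, s ^ 2 * pbar s r := intervalIntegral.integral_symm 1 t
    rw [hE t r, hsplit, hsym]
    field_simp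
    ring
  refine ⟨?_, hμ1, ?_, ?_⟩
  · -- regularity
    intro r t ht
    have ht0 : t ≠ 0 := ne_of_gt (hI ht)
    have hEC : ContDiffAt ℝ 1 (fun τ => E τ r) t := by
      rw [hEfun r]
      exact ((contDiffAt_const.div contDiffAt_id ht0).sub contDiffAt_const).add
        ((contDiffAt_const.div contDiffAt_id ht0).mul (hGC r).contDiffAt)
    have hμfun : (fun τ => μ τ r) = fun τ => -(1 / 2) * Real.log (E τ r) :=
      funext fun τ => hμdef τ r
    rw [hμfun]
    exact (contDiffAt_const.mul ((Real.contDiffAt_log.2 (ne_of_gt (hEpos t ht r))).comp t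
      hEC)).contDiffWithinAt
  · -- field equation for μ
    intro t ht r
    have ht0 : t ≠ 0 := ne_of_gt (hI ht)
    have hEt : E t r ≠ 0 := ne_of_gt (hEpos t ht r)
    have hμfun : (fun τ => μ τ r) = fun τ => -(1 / 2) * Real.log (E τ r) :=
      funext fun τ => hμdef τ r
    set D := -((Real.exp (-2 * μ0 r) + k) / t ^ 2)
        - (8 * π / t ^ 2) * (∫ s in t..(1:ℝ), s ^ 2 * pbar s r) - 8 * π * pbar t r * t with hD
    have hEd : HasDerivAt (fun τ => E τ r) D t := hEder r t ht0
    have hμd : HasDerivAt (fun τ => μ τ r) (-(1 / 2) * (D / E t r)) t := by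
      rw [hμfun]; exact (hEd.log hEt).const_mul _
    have hexpE : Real.exp (-2 * μ t r) = E t r := by
      rw [hμdef t r, show -2 * (-(1 / 2) * Real.log (E t r)) = Real.log (E t r) by ring,
        Real.exp_log (hEpos t ht r)]
    rw [hμd.deriv, hexpE]
    have h2 : E t r * (2 * t * (-(1 / 2) * (D / E t r)) - 1) = -(t * D) - E t r := by
      field_simp
    rw [h2, hD, hE t r]
    field_simp
    ring
  · -- uniqueness
    intro ν hνC hν1 hνeq t ht r
    have ht0 : t ≠ 0 := ne_of_gt (hI ht)
    -- the conserved quantity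
    set φ : ℝ → ℝ := fun τ => τ * Real.exp (-2 * ν τ r)
        + ∫ s in (1:ℝ)..τ, (k + 8 * π * (s ^ 2 * pbar s r)) with hφ
    have hφ1 : φ 1 = Real.exp (-2 * μ0 r) := by
      simp [hφ, hν1 r]
    have hconst : ∀ a b : ℝ, a ≤ b → a ∈ I → b ∈ I → φ b = φ a := by
      intro a b hab haI hbI
      have hIcc : Icc a b ⊆ I := hord.out haI hbI
      have hIoo : Ioo a b ⊆ I := fun x hx => hIcc (Ioo_subset_Icc_self hx)
      have hcont : ContinuousOn φ (Icc a b) := by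
        have hν_cont : ContinuousOn (fun τ => ν τ r) (Icc a b) :=
          ((hνC r).continuousOn).mono hIcc
        exact (continuousOn_id.mul
          (Real.continuous_exp.comp_continuousOn (continuousOn_const.mul hν_cont))).add
          ((prim_contDiff (hg r) 1).continuous.continuousOn)
      have hderiv : ∀ x ∈ Ioo a b, HasDerivWithinAt φ ((fun _ => (0:ℝ)) x) (Ioi x) x := by
        intro x hx
        have hxI : I ∈ nhds x := Filter.mem_of_superset (isOpen_Ioo.mem_nhds hx) hIoo
        have hψx : ContDiffAt ℝ 1 (fun τ => ν τ r) x := (hνC r).contDiffAt hxI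
        have hd : HasDerivAt (fun τ => ν τ r) (deriv (fun τ => ν τ r) x) x :=
          (hψx.differentiableAt one_ne_zero).hasDerivAt
        have hexp : HasDerivAt (fun τ => Real.exp (-2 * ν τ r))
            (Real.exp (-2 * ν x r) * (-2 * deriv (fun τ => ν τ r) x)) x :=
          (hd.const_mul (-2:ℝ)).exp
        have hmul := (hasDerivAt_id x).mul hexp
        have hint := prim_hasDerivAt (hg r) 1 x
        have hφd : HasDerivAt φ
            (1 * Real.exp (-2 * ν x r)
              + x * (Real.exp (-2 * ν x r) * (-2 * deriv (fun τ => ν τ r) x))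
              + (k + 8 * π * (x ^ 2 * pbar x r))) x := hmul.add hint
        have heq := hνeq x (hIoo hx) r
        have h0 : 1 * Real.exp (-2 * ν x r)
              + x * (Real.exp (-2 * ν x r) * (-2 * deriv (fun τ => ν τ r) x))
              + (k + 8 * π * (x ^ 2 * pbar x r)) = 0 := by
          linear_combination -1 * heq
        rw [h0] at hφd
        exact hφd.hasDerivWithinAt
      have h2 := intervalIntegral.integral_eq_sub_of_hasDeriv_right_of_le hab hcont hderiv
        (intervalIntegrable_const)
      simp at h2
      linarith
    have hφt : φ t = Real.exp (-2 * μ0 r) := by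
      rcases le_total t 1 with h | h
      · calc φ t = φ 1 := (hconst t 1 h ht h1I).symm
          _ = _ := hφ1
      · calc φ t = φ 1 := hconst 1 t h h1I ht
          _ = _ := hφ1
    have hνE : Real.exp (-2 * ν t r) = E t r := by
      have h1 : t * Real.exp (-2 * ν t r) = t * E t r := by
        rw [hkey r t ht0]
        have h3 : t * Real.exp (-2 * ν t r)
            + (∫ s in (1:ℝ)..t, (k + 8 * π * (s ^ 2 * pbar s r)))
            = Real.exp (-2 * μ0 r) := hφt
        linarith
      exact mul_left_cancel₀ ht0 h1
    have := congrArg Real.log hνE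
    rw [Real.log_exp] at this
    rw [hμdef t r]
    linarith
end

section
/- Let μ, λ : [1,T) × ℝ → ℝ be C¹ with λ(t, r+1) = λ(t,r) and μ(t, r+1) = μ(t,r), and suppose they satisfy μ̇ − λ̇ = (1 + k e^{2μ})/t with k ∈ {−1,0} (the case p = ρ), together with the bound e^{2μ(t,r)} ≥ t/(C − k t) for some C > 0 and all t ∈ [1,T). Then e^{μ(t,r) − λ(t,r)} ≤ e^{μ(1,r) − λ(1,r)} · t · (C − k)/(C − k t) for all t ∈ [1,T); in particular e^{μ−λ} ≤ C' t for a constant C' depending on the data. -/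
open Real Set

theorem exp_mu_minus_lambda_estimate
    (T C k : ℝ) (hT : 1 < T) (hC : 0 < C) (hk : k = -1 ∨ k = 0)
    (μ lam : ℝ → ℝ → ℝ)
    (hμC1 : ∀ r : ℝ, ContDiffOn ℝ 1 (fun τ => μ τ r) (Set.Ico 1 T))
    (hlamC1 : ∀ r : ℝ, ContDiffOn ℝ 1 (fun τ => lam τ r) (Set.Ico 1 T))
    (hμper : ∀ t r, μ t (r + 1) = μ t r)
    (hlamper : ∀ t r, lam t (r + 1) = lam t r)
    (hcont1 : Continuous (fun r => μ 1 r - lam 1 r))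
    (hrel : ∀ t ∈ Set.Ico (1:ℝ) T, ∀ r : ℝ,
      deriv (fun τ => μ τ r) t - deriv (fun τ => lam τ r) t
        = (1 + k * Real.exp (2 * μ t r)) / t)
    (hbound : ∀ t ∈ Set.Ico (1:ℝ) T, ∀ r : ℝ,
      t / (C - k * t) ≤ Real.exp (2 * μ t r)) :
    (∀ t ∈ Set.Ico (1:ℝ) T, ∀ r : ℝ,
      Real.exp (μ t r - lam t r)
        ≤ Real.exp (μ 1 r - lam 1 r) * t * (C - k) / (C - k * t)) ∧
    (∃ C' > (0:ℝ), ∀ t ∈ Set.Ico (1:ℝ) T, ∀ r : ℝ,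
      Real.exp (μ t r - lam t r) ≤ C' * t) := by
  have hk0 : k ≤ 0 := by rcases hk with h | h <;> simp [h]
  -- positivity of C - k*t for t ≥ 1
  have hCkt : ∀ t : ℝ, (1:ℝ) ≤ t → 0 < C - k * t := by
    intro t ht
    nlinarith
  have hCk1 : 0 < C - k := by have := hCkt 1 le_rfl; linarith
  -- main pointwise estimate
  have main : ∀ t ∈ Set.Ico (1:ℝ) T, ∀ r : ℝ,
      Real.exp (μ t r - lam t r)
        ≤ Real.exp (μ 1 r - lam 1 r) * t * (C - k) / (C - k * t) := by
    intro t ht r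
    obtain ⟨ht1, htT⟩ := ht
    set F : ℝ → ℝ := fun τ => μ τ r - lam τ r - Real.log τ + Real.log (C - k * τ) with hF
    -- F is antitone on Ico 1 T
    have hint : interior (Set.Ico (1:ℝ) T) = Set.Ioo 1 T := interior_Ico
    have hasF : ∀ x ∈ Set.Ioo (1:ℝ) T, HasDerivAt F
        (deriv (fun τ => μ τ r) x - deriv (fun τ => lam τ r) x - x⁻¹
          + (C - k * x)⁻¹ * (0 - k)) x := by
      intro x hx
      have hxmem : x ∈ Set.Ico (1:ℝ) T := ⟨le_of_lt hx.1, hx.2⟩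
      have hnhds : Set.Ico (1:ℝ) T ∈ nhds x := Ico_mem_nhds hx.1 hx.2
      have hx0 : (0:ℝ) < x := lt_trans one_pos hx.1
      have hμd : DifferentiableAt ℝ (fun τ => μ τ r) x :=
        (((hμC1 r).differentiableOn one_ne_zero) x hxmem).differentiableAt hnhds
      have hlamd : DifferentiableAt ℝ (fun τ => lam τ r) x :=
        (((hlamC1 r).differentiableOn one_ne_zero) x hxmem).differentiableAt hnhds
      have h1 : HasDerivAt (fun τ => μ τ r) (deriv (fun τ => μ τ r) x) x :=
        hμd.hasDerivAt
      have h2 : HasDerivAt (fun τ => lam τ r) (deriv (fun τ => lam τ r) x) x :=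
        hlamd.hasDerivAt
      have h3 : HasDerivAt Real.log x⁻¹ x := Real.hasDerivAt_log (ne_of_gt hx0)
      have hin : HasDerivAt (fun τ => C - k * τ) (0 - k) x := by
        simpa using ((hasDerivAt_id' x).const_mul k).const_sub C
      have h4 : HasDerivAt (fun τ => Real.log (C - k * τ)) ((C - k * x)⁻¹ * (0 - k)) x := by
        have := (Real.hasDerivAt_log (ne_of_gt (hCkt x (le_of_lt hx.1)))).comp x hin
        exact this
      exact ((h1.sub h2).sub h3).add h4
    have hderivF : ∀ x ∈ Set.Ioo (1:ℝ) T, deriv F x ≤ 0 := by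
      intro x hx
      rw [(hasF x hx).deriv]
      have hxmem : x ∈ Set.Ico (1:ℝ) T := ⟨le_of_lt hx.1, hx.2⟩
      have hx0 : (0:ℝ) < x := lt_trans one_pos hx.1
      have hCx : 0 < C - k * x := hCkt x (le_of_lt hx.1)
      rw [hrel x hxmem r]
      have hb := hbound x hxmem r
      -- goal: (1 + k * exp(2μ))/x - x⁻¹ + (C - k x)⁻¹ * (0 - k) ≤ 0
      rcases hk with h | h
      · subst h
        rw [div_le_iff₀ hCx] at hb
        have e1 : (1 + (-1) * Real.exp (2 * μ x r)) / x - x⁻¹ + (C - (-1) * x)⁻¹ * (0 - (-1))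
            = (C + x)⁻¹ - Real.exp (2 * μ x r) / x := by
          rw [show C - (-1) * x = C + x by ring]
          field_simp
          ring
        rw [e1]
        have : (C + x)⁻¹ ≤ Real.exp (2 * μ x r) / x := by
          rw [le_div_iff₀ hx0, inv_mul_le_iff₀ (by linarith : (0:ℝ) < C + x)]
          nlinarith
        linarith
      · subst h
        have e1 : (1 + 0 * Real.exp (2 * μ x r)) / x - x⁻¹ + (C - 0 * x)⁻¹ * (0 - 0) = 0 := by
          field_simp
          ring
        rw [e1]
    have hcontF : ContinuousOn F (Set.Ico 1 T) := by
      apply ContinuousOn.add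
      apply ContinuousOn.sub
      apply ContinuousOn.sub (hμC1 r).continuousOn (hlamC1 r).continuousOn
      · exact Real.continuousOn_log.comp continuousOn_id
          (fun x hx => by simp; linarith [hx.1])
      · exact Real.continuousOn_log.comp
          (continuousOn_const.sub (continuousOn_const.mul continuousOn_id))
          (fun x hx => ne_of_gt (hCkt x hx.1))
    have hdiffF : DifferentiableOn ℝ F (interior (Set.Ico 1 T)) := by
      rw [hint]
      intro x hx
      exact ((hasF x hx).differentiableAt).differentiableWithinAt
    have hanti : AntitoneOn F (Set.Ico 1 T) :=
      antitoneOn_of_deriv_nonpos (convex_Ico 1 T) hcontF hdiffF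
        (fun x hx => hderivF x (by rwa [hint] at hx))
    have h1mem : (1:ℝ) ∈ Set.Ico (1:ℝ) T := ⟨le_rfl, hT⟩
    have hFle : F t ≤ F 1 := hanti h1mem ⟨ht1, htT⟩ ht1
    -- unfold F and exponentiate
    have hCkt' : 0 < C - k * t := hCkt t ht1
    have ht0 : (0:ℝ) < t := lt_of_lt_of_le one_pos ht1
    have key : μ t r - lam t r ≤
        μ 1 r - lam 1 r + Real.log t + Real.log (C - k) - Real.log (C - k * t) := by
      have hF1 : F 1 = μ 1 r - lam 1 r + Real.log (C - k) := by
        simp [hF, Real.log_one]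
      have hFt : F t = μ t r - lam t r - Real.log t + Real.log (C - k * t) := rfl
      rw [hFt, hF1] at hFle
      linarith
    calc Real.exp (μ t r - lam t r)
        ≤ Real.exp (μ 1 r - lam 1 r + Real.log t + Real.log (C - k) - Real.log (C - k * t)) :=
          Real.exp_le_exp.mpr key
      _ = Real.exp (μ 1 r - lam 1 r) * t * (C - k) / (C - k * t) := by
          rw [sub_eq_add_neg, Real.exp_add, Real.exp_add, Real.exp_add,
            Real.exp_log ht0, Real.exp_log hCk1, Real.exp_neg, Real.exp_log hCkt']
          rw [div_eq_mul_inv]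
  refine ⟨main, ?_⟩
  -- bound exp(μ 1 r - lam 1 r) using periodicity and compactness
  have hper : Function.Periodic (fun r => μ 1 r - lam 1 r) 1 := by
    intro r; simp [hμper, hlamper]
  obtain ⟨r₀, hr₀mem, hr₀⟩ := isCompact_Icc.exists_isMaxOn
    (Set.nonempty_Icc.mpr zero_le_one)
    (hcont1.continuousOn : ContinuousOn (fun r => μ 1 r - lam 1 r) (Set.Icc 0 1))
  refine ⟨Real.exp (μ 1 r₀ - lam 1 r₀), Real.exp_pos _, ?_⟩
  intro t ht r
  obtain ⟨y, hy, hyeq⟩ := hper.exists_mem_Ico₀ one_pos r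
  have hbig : μ 1 r - lam 1 r ≤ μ 1 r₀ - lam 1 r₀ := by
    have := hr₀ (⟨hy.1, le_of_lt hy.2⟩ : y ∈ Set.Icc (0:ℝ) 1)
    simpa [hyeq] using this
  have h1 := main t ht r
  have ht0 : (0:ℝ) < t := lt_of_lt_of_le one_pos ht.1
  have hCkt' : 0 < C - k * t := hCkt t ht.1
  have hle2 : Real.exp (μ 1 r - lam 1 r) * t * (C - k) / (C - k * t)
      ≤ Real.exp (μ 1 r₀ - lam 1 r₀) * t := by
    rw [div_le_iff₀ hCkt']
    have hexp : Real.exp (μ 1 r - lam 1 r) ≤ Real.exp (μ 1 r₀ - lam 1 r₀) :=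
      Real.exp_le_exp.mpr hbig
    have hkk : C - k ≤ C - k * t := by nlinarith [ht.1]
    have hmm : Real.exp (μ 1 r - lam 1 r) * (C - k)
        ≤ Real.exp (μ 1 r₀ - lam 1 r₀) * (C - k * t) :=
      mul_le_mul hexp hkk hCk1.le (Real.exp_pos _).le
    nlinarith [hmm, ht0]
  linarith
end
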